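/- Let β ⊆ α be compositions with ℓ(α) = ℓ and ℓ(β) = k, let γ = (α_{k+1}, …, α_ℓ) (the empty composition if k = ℓ) and M = |γ|. Then: (1) if k < ℓ, |SIT(γ)| = M! / ( [∏_{j=0}^{ℓ−k−1} (M − (γ_1 + ⋯ + γ_j))] · [∏_{i=1}^{ℓ−k} (γ_i − 1)!] ), where the empty sum γ_1+⋯+γ_0 is 0; and (2) |SIT(α/β)| = |SIT(γ)| · (|α|−|β|)! / ( M! · ∏_{i=1}^{k} (α_i − β_i)! ), where |SIT(∅)| = 1. -/

import Mathlib

open scoped Classical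

namespace ImmaculateSkew

/-- `part α i` is the `i`-th part (0-indexed) of the composition `α`, or `0` if out of range. -/
def part (α : List ℕ) (i : ℕ) : ℕ := α.getD i 0

/-- a composition: a list of positive integers -/
def IsComposition (α : List ℕ) : Prop := ∀ x ∈ α, 0 < x

/-- `β ⊆ α` for compositions -/
def SubComp (β α : List ℕ) : Prop :=
  β.length ≤ α.length ∧ ∀ j < β.length, part β j ≤ part α j

/-- cell `(i, j)` (row `i` from the bottom, column `j`, both 0-indexed) lies in the diagram of `α` -/
def InDiagram (α : List ℕ) (c : ℕ × ℕ) : Prop :=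
  c.1 < α.length ∧ c.2 < part α c.1

/-- cell lies in the skew diagram `α/β` -/
def InSkew (α β : List ℕ) (c : ℕ × ℕ) : Prop :=
  InDiagram α c ∧ ¬ InDiagram β c

/-- the finite set of cells of the skew diagram `α/β` -/
noncomputable def skewCells (α β : List ℕ) : Finset (ℕ × ℕ) :=
  (Finset.range α.length ×ˢ Finset.range (α.sum + 1)).filter (InSkew α β)

/-- `N = |α| - |β|` -/
def skewSize (α β : List ℕ) : ℕ := α.sum - β.sum

/-- a filling of the cells of `α/β` using each entry of `E` exactly once, zero off the diagram -/
structure IsStdOn (α β : List ℕ) (E : Finset ℕ) (T : ℕ × ℕ → ℕ) : Prop where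
  zero_off : ∀ c, ¬ InSkew α β c → T c = 0
  mem : ∀ c, InSkew α β c → T c ∈ E
  inj : ∀ c c', InSkew α β c → InSkew α β c' → T c = T c' → c = c'
  surj : ∀ v ∈ E, ∃ c, InSkew α β c ∧ T c = v

/-- row entries strictly increase left to right -/
def RowsStrict (α β : List ℕ) (T : ℕ × ℕ → ℕ) : Prop :=
  ∀ i j j', j < j' → InSkew α β (i, j) → InSkew α β (i, j') → T (i, j) < T (i, j')

/-- row entries weakly increase left to right -/
def RowsWeak (α β : List ℕ) (T : ℕ × ℕ → ℕ) : Prop :=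
  ∀ i j j', j < j' → InSkew α β (i, j) → InSkew α β (i, j') → T (i, j) ≤ T (i, j')

/-- all column entries strictly increase bottom to top -/
def ColsStrict (α β : List ℕ) (T : ℕ × ℕ → ℕ) : Prop :=
  ∀ i i' j, i < i' → InSkew α β (i, j) → InSkew α β (i', j) → T (i, j) < T (i', j)

/-- all column entries weakly increase bottom to top -/
def ColsWeak (α β : List ℕ) (T : ℕ × ℕ → ℕ) : Prop :=
  ∀ i i' j, i < i' → InSkew α β (i, j) → InSkew α β (i', j) → T (i, j) ≤ T (i', j)

/-- the column-1 entries (those in `α/β`) strictly increase bottom to top -/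
def FirstColStrict (α β : List ℕ) (T : ℕ × ℕ → ℕ) : Prop :=
  ∀ i i', i < i' → InSkew α β (i, 0) → InSkew α β (i', 0) → T (i, 0) < T (i', 0)

/-- the column-1 entries (those in `α/β`) weakly increase bottom to top -/
def FirstColWeak (α β : List ℕ) (T : ℕ × ℕ → ℕ) : Prop :=
  ∀ i i', i < i' → InSkew α β (i, 0) → InSkew α β (i', 0) → T (i, 0) ≤ T (i', 0)

/-- standard immaculate tableau of shape `α/β` with entry set `E` -/
def IsSITOn (α β : List ℕ) (E : Finset ℕ) (T : ℕ × ℕ → ℕ) : Prop :=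
  IsStdOn α β E T ∧ RowsStrict α β T ∧ FirstColStrict α β T

/-- standard immaculate tableau of shape `α/β` (entries `1, …, N`) -/
def IsSIT (α β : List ℕ) (T : ℕ × ℕ → ℕ) : Prop :=
  IsSITOn α β (Finset.Icc 1 (skewSize α β)) T

/-- standard extended tableau: all columns increase bottom to top -/
def IsSET (α β : List ℕ) (T : ℕ × ℕ → ℕ) : Prop :=
  IsSIT α β T ∧ ColsStrict α β T

/-- the four descent-set variants -/
inductive Variant | dI | rdI | Astar | Abar

/-- `rowRel a r r'`: the relation required between the row `r` containing `i` and the row `r'`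
containing `i+1` for `i` to be an `a`-descent -/
def rowRel : Variant → ℕ → ℕ → Prop
  | .dI    => fun r r' => r < r'
  | .rdI   => fun r r' => r' ≤ r
  | .Astar => fun r r' => r' < r
  | .Abar  => fun r r' => r ≤ r'

/-- the `a`-descent set of a tableau -/
noncomputable def Des (a : Variant) (α β : List ℕ) (T : ℕ × ℕ → ℕ) : Finset ℕ :=
  (Finset.Icc 1 (skewSize α β - 1)).filter fun k =>
    ∃ c c', InSkew α β c ∧ InSkew α β c' ∧ T c = k ∧ T c' = k + 1 ∧ rowRel a c.1 c'.1

/-- interchange the entries `i` and `i+1` -/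
def swapEntries (i : ℕ) (T : ℕ × ℕ → ℕ) : ℕ × ℕ → ℕ :=
  fun c => if T c = i then i + 1 else if T c = i + 1 then i else T c

/-- the 0-Hecke operator `π_i^a` on `SIT(α/β) ∪ {0}` (the zero function plays the role of `0`) -/
noncomputable def piOp (a : Variant) (α β : List ℕ) (i : ℕ) (T : ℕ × ℕ → ℕ) : ℕ × ℕ → ℕ :=
  if i ∈ Des a α β T then
    (if IsSIT α β (swapEntries i T) then swapEntries i T else fun _ => 0)
  else T

/-- the fundamental quasisymmetric function `F_{comp(D)}` for `D ⊆ {1,…,N-1}`, as a power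
series in the variables `x_1, x_2, …` (variable `x_n` is `X n`; `x_0` is unused) -/
noncomputable def Fund (N : ℕ) (D : Finset ℕ) : MvPowerSeries ℕ ℚ :=
  fun d => (Nat.card {f : Fin N → ℕ //
    (∀ j, 1 ≤ f j) ∧
    (∀ j k : Fin N, j ≤ k → f j ≤ f k) ∧
    (∀ (j : ℕ) (_ : 1 ≤ j) (h2 : j < N), j ∈ D → f ⟨j - 1, by omega⟩ < f ⟨j, h2⟩) ∧
    (∑ j, Finsupp.single (f j) 1) = d} : ℚ)

/-- the generating function `Σ_T x^T` over all fillings of the given cells with positive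
integers satisfying the predicate `P` (and equal to `0` off the given cells) -/
noncomputable def genF (cs : Finset (ℕ × ℕ)) (P : (ℕ × ℕ → ℕ) → Prop) :
    MvPowerSeries ℕ ℚ :=
  fun d => (Nat.card {T : ℕ × ℕ → ℕ //
    (∀ c, c ∉ cs → T c = 0) ∧ (∀ c ∈ cs, 1 ≤ T c) ∧ P T ∧
    (∑ c ∈ cs, Finsupp.single (T c) 1) = d} : ℚ)

/-- complete homogeneous symmetric function `h_r` -/
noncomputable def hFun (r : ℕ) : MvPowerSeries ℕ ℚ :=
  fun d => (Nat.card {f : Fin r → ℕ //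
    (∀ j, 1 ≤ f j) ∧ (∀ j k : Fin r, j ≤ k → f j ≤ f k) ∧
    (∑ j, Finsupp.single (f j) 1) = d} : ℚ)

/-- elementary symmetric function `e_r` -/
noncomputable def eFun (r : ℕ) : MvPowerSeries ℕ ℚ :=
  fun d => (Nat.card {f : Fin r → ℕ //
    (∀ j, 1 ≤ f j) ∧ (∀ j k : Fin r, j < k → f j < f k) ∧
    (∑ j, Finsupp.single (f j) 1) = d} : ℚ)

/-- send a filling to the corresponding basis vector of the free `ℚ`-vector space on
`SIT(α/β)`, or to the zero vector if it is not a standard immaculate tableau -/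
noncomputable def toBasis (α β : List ℕ) (U : ℕ × ℕ → ℕ) :
    ({T : ℕ × ℕ → ℕ // IsSIT α β T} →₀ ℚ) :=
  if h : IsSIT α β U then Finsupp.single ⟨U, h⟩ 1 else 0

/-- the linear extension of `π_i^a` to the free `ℚ`-vector space on `SIT(α/β)` -/
noncomputable def piLin (a : Variant) (α β : List ℕ) (i : ℕ) :
    ({T : ℕ × ℕ → ℕ // IsSIT α β T} →₀ ℚ) →ₗ[ℚ]
      ({T : ℕ × ℕ → ℕ // IsSIT α β T} →₀ ℚ) :=
  Finsupp.lift _ ℚ _ (fun T => toBasis α β (piOp a α β i T.1))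

/-- one step: the tableau `T` is obtained from `S` by applying one operator `π_i^a` -/
def stepRel (a : Variant) (α β : List ℕ) (S T : ℕ × ℕ → ℕ) : Prop :=
  IsSIT α β T ∧ ∃ i, 1 ≤ i ∧ i ≤ skewSize α β - 1 ∧ piOp a α β i S = T

/-- `T` is obtained from `S` by applying a (possibly empty) sequence of operators `π_i^a`,
all intermediate results being tableaux -/
def reach (a : Variant) (α β : List ℕ) : (ℕ × ℕ → ℕ) → (ℕ × ℕ → ℕ) → Prop :=
  Relation.ReflTransGen (stepRel a α β)

/-- the number of skew cells of `α/β` strictly above row `i` other than column-1 cells -/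
noncomputable def aboveCount (α β : List ℕ) (i : ℕ) : ℕ :=
  ∑ i' ∈ Finset.Ico (i + 1) α.length,
    (if i' < β.length then part α i' - part β i' else part α i' - 1)

/-- the tableau `S^0_{α/β}`: the column-1 cells of `α/β` are filled with `1, …, ℓ(α)-ℓ(β)`
bottom to top, then the remaining cells are filled row by row, top to bottom, left to right,
with consecutive integers -/
noncomputable def S0 (α β : List ℕ) : ℕ × ℕ → ℕ :=
  fun c =>
    if InSkew α β c then
      if c.2 = 0 ∧ β.length ≤ c.1 then c.1 - β.length + 1
      else (α.length - β.length) + aboveCount α β c.1 +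
        (if c.1 < β.length then c.2 - part β c.1 + 1 else c.2)
    else 0

/-- the row superstandard tableau `S^{row}_{α/β}`: rows filled left to right with `1, 2, …, N`,
bottom row first -/
noncomputable def Srow (α β : List ℕ) : ℕ × ℕ → ℕ :=
  fun c =>
    if InSkew α β c then
      (∑ i' ∈ Finset.range c.1, (part α i' - part β i')) + (c.2 - part β c.1 + 1)
    else 0

/-- `c` is read before `c'` in the reading word (rows top to bottom, right to left in a row) -/
def readBefore (c c' : ℕ × ℕ) : Prop :=
  c'.1 < c.1 ∨ (c.1 = c'.1 ∧ c'.2 < c.2)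

/-- the number of inversions of the reading word of a tableau of shape `α/β` -/
noncomputable def invNum (α β : List ℕ) (T : ℕ × ℕ → ℕ) : ℕ :=
  ((skewCells α β ×ˢ skewCells α β).filter
    (fun p => readBefore p.1 p.2 ∧ T p.2 < T p.1)).card

/-- `φ_U(T)`: fill the cells of `β` by `U` and those of `α/β` by `T` with all entries of `T`
shifted up by `m = |β|` -/
noncomputable def phiU (α β : List ℕ) (U T : ℕ × ℕ → ℕ) : ℕ × ℕ → ℕ :=
  fun c => if InDiagram β c then U c else if InSkew α β c then T c + β.sum else 0

/-- restriction `T_{≤ m}` of `T` to entries `≤ m` -/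
def restrLe (m : ℕ) (T : ℕ × ℕ → ℕ) : ℕ × ℕ → ℕ :=
  fun c => if T c ≤ m then T c else 0

/-- restriction `T_{> m}` of `T` to entries `> m` -/
def restrGt (m : ℕ) (T : ℕ × ℕ → ℕ) : ℕ × ℕ → ℕ :=
  fun c => if m < T c then T c else 0

/-- standardisation `std(T_{>m})`: keep the entries `> m` and subtract `m` from each -/
def stdGt (m : ℕ) (T : ℕ × ℕ → ℕ) : ℕ × ℕ → ℕ :=
  fun c => if m < T c then T c - m else 0

/-- `T ∈ X_{α,β}`: `T ∈ SIT(α)` and the entries `> |β|` of `T` occupy exactly the cells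
of `α/β` -/
def memX (α β : List ℕ) (T : ℕ × ℕ → ℕ) : Prop :=
  IsSIT α [] T ∧ ∀ c, InDiagram α c → (β.sum < T c ↔ ¬ InDiagram β c)

/-! ### Auxiliary material for the enumeration theorem -/

lemma part_nil (i : ℕ) : part [] i = 0 := rfl

lemma part_cons_zero (x : ℕ) (l : List ℕ) : part (x :: l) 0 = x := rfl

lemma part_cons_succ (x : ℕ) (l : List ℕ) (i : ℕ) : part (x :: l) (i + 1) = part l i := rfl

lemma inSkew_cons (a : ℕ) (α' β : List ℕ) (i j : ℕ) :
    InSkew α' β.tail (i, j) ↔ InSkew (a :: α') β (i + 1, j) := by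
  cases β <;> simp [InSkew, InDiagram, part, Nat.succ_lt_succ_iff]

lemma inSkew_zero (a : ℕ) (α' β : List ℕ) (j : ℕ) :
    InSkew (a :: α') β (0, j) ↔ part β 0 ≤ j ∧ j < a := by
  cases β <;> simp [InSkew, InDiagram, part] <;> omega

lemma subComp_tail {b a : ℕ} {β' α' : List ℕ} (h : SubComp (b :: β') (a :: α')) :
    SubComp β' α' := by
  obtain ⟨h1, h2⟩ := h
  refine ⟨by simpa using h1, fun j hj => ?_⟩
  have h3 := h2 (j + 1) (by simp only [List.length_cons]; omega)
  simpa [part_cons_succ] using h3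

lemma subComp_sum_le : ∀ {β α : List ℕ}, SubComp β α → β.sum ≤ α.sum := by
  intro β
  induction β with
  | nil => intro α _; simp
  | cons b β' ih =>
      intro α h
      match α with
      | [] => exact absurd h.1 (by simp)
      | a :: α' =>
          have hb : b ≤ a := by simpa [part] using h.2 0 (by simp)
          have hs := ih (subComp_tail h)
          simp only [List.sum_cons]
          omega

lemma skew_split {a : ℕ} {α' β : List ℕ} (h : SubComp β (a :: α')) :
    skewSize (a :: α') β = (a - part β 0) + skewSize α' β.tail := by
  cases β with
  | nil => simp [skewSize, part]
  | cons b β' =>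
      have hb : b ≤ a := by simpa [part] using h.2 0 (by simp)
      have hs := subComp_sum_le (subComp_tail h)
      simp only [skewSize, List.sum_cons, List.tail_cons, part_cons_zero]
      omega

/-! ### Rank in a finite set of naturals -/

noncomputable def rnk (A : Finset ℕ) (v : ℕ) : ℕ := (A.filter (· ≤ v)).card

lemma rnk_lt_rnk {A : Finset ℕ} {v w : ℕ} (hw : w ∈ A) (hvw : v < w) : rnk A v < rnk A w := by
  apply Finset.card_lt_card
  constructor
  · intro x hx
    rw [Finset.mem_filter] at hx ⊢
    exact ⟨hx.1, hx.2.trans hvw.le⟩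
  · intro hsub
    have h1 := hsub (Finset.mem_filter.2 ⟨hw, le_refl w⟩)
    have h2 := (Finset.mem_filter.1 h1).2
    omega

lemma one_le_rnk {A : Finset ℕ} {v : ℕ} (hv : v ∈ A) : 1 ≤ rnk A v :=
  Finset.card_pos.2 ⟨v, Finset.mem_filter.2 ⟨hv, le_refl v⟩⟩

lemma rnk_le_card (A : Finset ℕ) (v : ℕ) : rnk A v ≤ A.card :=
  Finset.card_le_card (Finset.filter_subset _ _)

lemma rnk_injOn {A : Finset ℕ} {v w : ℕ} (hv : v ∈ A) (hw : w ∈ A)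
    (h : rnk A v = rnk A w) : v = w := by
  rcases lt_trichotomy v w with h1 | h1 | h1
  · exact absurd h (rnk_lt_rnk hw h1).ne
  · exact h1
  · exact absurd h.symm (rnk_lt_rnk hv h1).ne

lemma rnk_orderEmbOfFin (A : Finset ℕ) {n : ℕ} (h : A.card = n) (i : Fin n) :
    rnk A (A.orderEmbOfFin h i) = (i : ℕ) + 1 := by
  have himg : A.filter (· ≤ A.orderEmbOfFin h i) = (Finset.Iic i).image (A.orderEmbOfFin h) := by
    ext v
    simp only [Finset.mem_filter, Finset.mem_image, Finset.mem_Iic]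
    constructor
    · rintro ⟨hvA, hvle⟩
      have hrange : v ∈ Set.range (A.orderEmbOfFin h) := by
        rw [Finset.range_orderEmbOfFin]; exact hvA
      obtain ⟨j, hj⟩ := hrange
      refine ⟨j, ?_, hj⟩
      rw [← hj] at hvle
      exact (A.orderEmbOfFin h).le_iff_le.1 hvle
    · rintro ⟨j, hji, rfl⟩
      exact ⟨Finset.orderEmbOfFin_mem A h j, (A.orderEmbOfFin h).le_iff_le.2 hji⟩
  rw [rnk, himg, Finset.card_image_of_injective _ (A.orderEmbOfFin h).injective, Fin.card_Iic]

/-! ### the `u`-th smallest element of a finite set -/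

noncomputable def nthe (A : Finset ℕ) (u : ℕ) : ℕ := (A.sort (· ≤ ·)).getD u 0

lemma nthe_eq {A : Finset ℕ} {n : ℕ} (h : A.card = n) {u : ℕ} (hu : u < n) :
    nthe A u = A.orderEmbOfFin h ⟨u, hu⟩ := by
  rw [Finset.orderEmbOfFin_apply, nthe,
    List.getD_eq_getElem _ _ (by rw [Finset.length_sort, h]; exact hu)]
  rfl

lemma nthe_mem {A : Finset ℕ} {n : ℕ} (h : A.card = n) {u : ℕ} (hu : u < n) :
    nthe A u ∈ A := by
  rw [nthe_eq h hu]; exact Finset.orderEmbOfFin_mem A h _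

lemma nthe_lt {A : Finset ℕ} {n : ℕ} (h : A.card = n) {u u' : ℕ} (hu' : u' < n)
    (huu : u < u') : nthe A u < nthe A u' := by
  rw [nthe_eq h (lt_trans huu hu'), nthe_eq h hu']
  exact (A.orderEmbOfFin h).strictMono (by exact huu)

lemma nthe_inj {A : Finset ℕ} {n : ℕ} (h : A.card = n) {u u' : ℕ} (hu : u < n) (hu' : u' < n)
    (he : nthe A u = nthe A u') : u = u' := by
  rcases lt_trichotomy u u' with h1 | h1 | h1
  · exact absurd he (nthe_lt h hu' h1).ne
  · exact h1
  · exact absurd he.symm (nthe_lt h hu h1).ne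

lemma rnk_nthe {A : Finset ℕ} {n : ℕ} (h : A.card = n) {u : ℕ} (hu : u < n) :
    rnk A (nthe A u) = u + 1 := by
  rw [nthe_eq h hu, rnk_orderEmbOfFin]

lemma exists_nthe {A : Finset ℕ} {n : ℕ} (h : A.card = n) {v : ℕ} (hv : v ∈ A) :
    ∃ u, u < n ∧ nthe A u = v := by
  have hrange : v ∈ Set.range (A.orderEmbOfFin h) := by
    rw [Finset.range_orderEmbOfFin]; exact hv
  obtain ⟨j, hj⟩ := hrange
  exact ⟨j, j.isLt, by rw [nthe_eq h j.isLt, Fin.eta]; exact hj⟩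

lemma nthe_zero_of_one_mem {A : Finset ℕ} (h1 : 1 ∈ A) (hpos : ∀ v ∈ A, 1 ≤ v) :
    nthe A 0 = 1 := by
  have hn : 0 < A.card := Finset.card_pos.2 ⟨1, h1⟩
  rw [nthe_eq rfl hn, Finset.orderEmbOfFin_zero rfl hn]
  exact le_antisymm (Finset.min'_le A 1 h1) (hpos _ (A.min'_mem _))

/-! ### peeling off the bottom row -/

noncomputable def rowSet (a b : ℕ) (T : ℕ × ℕ → ℕ) : Finset ℕ :=
  (Finset.Ico b a).image fun j => T (0, j)

noncomputable def upSet (N a b : ℕ) (T : ℕ × ℕ → ℕ) : Finset ℕ :=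
  Finset.Icc 1 N \ rowSet a b T

noncomputable def upTab (α' β' : List ℕ) (N a b : ℕ) (T : ℕ × ℕ → ℕ) : ℕ × ℕ → ℕ :=
  fun c => if InSkew α' β' c then rnk (upSet N a b T) (T (c.1 + 1, c.2)) else 0

section Step

variable {a : ℕ} {α' β : List ℕ} {T : ℕ × ℕ → ℕ}

lemma rowSet_subset (hT : IsSIT (a :: α') β T) :
    rowSet a (part β 0) T ⊆ Finset.Icc 1 (skewSize (a :: α') β) := by
  intro v hv
  obtain ⟨j, hj, rfl⟩ := Finset.mem_image.1 hv
  rw [Finset.mem_Ico] at hj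
  exact hT.1.mem _ ((inSkew_zero a α' β j).2 hj)

lemma rowSet_card (hT : IsSIT (a :: α') β T) :
    (rowSet a (part β 0) T).card = a - part β 0 := by
  rw [rowSet, Finset.card_image_of_injOn, Nat.card_Ico]
  intro j hj j' hj' hjj
  rw [Finset.coe_Ico, Set.mem_Ico] at hj hj'
  have h := hT.1.inj (0, j) (0, j') ((inSkew_zero a α' β j).2 hj)
    ((inSkew_zero a α' β j').2 hj') hjj
  simpa using h

lemma one_mem_rowSet (hα : IsComposition (a :: α')) (hT : IsSIT (a :: α') β T)
    (hnil : β = []) : 1 ∈ rowSet a (part β 0) T := by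
  subst hnil
  have ha : 0 < a := hα a (by simp)
  have hN : 1 ≤ skewSize (a :: α') [] := by
    simp only [skewSize, List.sum_cons, List.sum_nil]; omega
  obtain ⟨c, hc, hc1⟩ := hT.1.surj 1 (Finset.mem_Icc.2 ⟨le_refl 1, hN⟩)
  obtain ⟨i, j⟩ := c
  by_cases hi : i = 0
  · subst hi
    exact Finset.mem_image.2 ⟨j, Finset.mem_Ico.2
      ⟨Nat.zero_le _, ((inSkew_zero a α' [] j).1 hc).2⟩, hc1⟩
  · exfalso
    have hcell : InSkew (a :: α') [] (i, 0) := by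
      refine ⟨⟨hc.1.1, ?_⟩, by simp [InDiagram]⟩
      have hil : i < (a :: α').length := hc.1.1
      have : part (a :: α') i = (a :: α').get ⟨i, hil⟩ := List.getD_eq_getElem _ _ hil
      rw [this]
      exact hα _ (List.get_mem _ _)
    by_cases hj : j = 0
    · subst hj
      have h00 : InSkew (a :: α') [] (0, 0) := (inSkew_zero a α' [] 0).2 ⟨le_refl 0, ha⟩
      have hlt := hT.2.2 0 i (by omega) h00 hcell
      have hm := hT.1.mem _ h00
      rw [hc1] at hlt
      rw [Finset.mem_Icc] at hm
      omega
    · have hlt := hT.2.1 i 0 j (by omega) hcell hc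
      have hm := hT.1.mem _ hcell
      rw [hc1] at hlt
      rw [Finset.mem_Icc] at hm
      omega

lemma upSet_card (hsub : SubComp β (a :: α')) (hT : IsSIT (a :: α') β T) :
    (upSet (skewSize (a :: α') β) a (part β 0) T).card = skewSize α' β.tail := by
  rw [upSet, Finset.card_sdiff_of_subset (rowSet_subset hT), Nat.card_Icc, rowSet_card hT]
  have := skew_split hsub
  omega

lemma mem_upSet (hT : IsSIT (a :: α') β T) {i j : ℕ} (h : InSkew α' β.tail (i, j)) :
    T (i + 1, j) ∈ upSet (skewSize (a :: α') β) a (part β 0) T := by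
  have hsk := (inSkew_cons a α' β i j).1 h
  refine Finset.mem_sdiff.2 ⟨hT.1.mem _ hsk, fun hmem => ?_⟩
  obtain ⟨j', hj', hval⟩ := Finset.mem_image.1 hmem
  rw [Finset.mem_Ico] at hj'
  have heq := hT.1.inj _ _ ((inSkew_zero a α' β j').2 hj') hsk hval
  exact Nat.succ_ne_zero i (congrArg Prod.fst heq).symm

lemma isSIT_upTab (hsub : SubComp β (a :: α')) (hT : IsSIT (a :: α') β T) :
    IsSIT α' β.tail (upTab α' β.tail (skewSize (a :: α') β) a (part β 0) T) := by
  set N := skewSize (a :: α') β with hN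
  set b := part β 0 with hb
  set R := upSet N a b T with hR
  set N' := skewSize α' β.tail with hN'
  have hRcard : R.card = N' := upSet_card hsub hT
  have hmemIcc : ∀ c : ℕ × ℕ, InSkew α' β.tail c →
      upTab α' β.tail N a b T c ∈ Finset.Icc 1 N' := by
    intro c hc
    rw [upTab, if_pos hc, Finset.mem_Icc]
    obtain ⟨i, j⟩ := c
    have hm := mem_upSet hT hc
    exact ⟨one_le_rnk hm, (rnk_le_card R _).trans_eq hRcard⟩
  refine ⟨⟨?_, fun c hc => hmemIcc c hc, ?_, ?_⟩, ?_, ?_⟩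
  · intro c hc
    rw [upTab, if_neg hc]
  · -- inj
    rintro ⟨i, j⟩ ⟨i', j'⟩ hc hc' he
    simp only [upTab] at he
    rw [if_pos hc, if_pos hc'] at he
    have hv := mem_upSet hT hc
    have hv' := mem_upSet hT hc'
    have := hT.1.inj _ _ ((inSkew_cons a α' β i j).1 hc) ((inSkew_cons a α' β i' j').1 hc')
      (rnk_injOn hv hv' he)
    have h1 := congrArg Prod.fst this
    have h2 := congrArg Prod.snd this
    simp only at h1 h2
    simp only [Prod.mk.injEq]
    exact ⟨by omega, by omega⟩
  · -- surj
    intro u hu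
    rw [Finset.mem_Icc] at hu
    have himg : R.image (rnk R) = Finset.Icc 1 N' := by
      apply Finset.eq_of_subset_of_card_le
      · intro x hx
        obtain ⟨v, hv, rfl⟩ := Finset.mem_image.1 hx
        exact Finset.mem_Icc.2 ⟨one_le_rnk hv, (rnk_le_card R v).trans_eq hRcard⟩
      · rw [Nat.card_Icc, Finset.card_image_of_injOn fun v hv w hw => rnk_injOn hv hw]
        omega
    have : u ∈ R.image (rnk R) := by rw [himg]; exact Finset.mem_Icc.2 hu
    obtain ⟨v, hvR, hvu⟩ := Finset.mem_image.1 this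
    have hvIcc : v ∈ Finset.Icc 1 N := (Finset.mem_sdiff.1 hvR).1
    obtain ⟨⟨i0, j0⟩, hc0, hval0⟩ := hT.1.surj v hvIcc
    match i0 with
    | 0 =>
        exfalso
        have hj0 := (inSkew_zero a α' β j0).1 hc0
        exact (Finset.mem_sdiff.1 hvR).2 (Finset.mem_image.2 ⟨j0, Finset.mem_Ico.2 hj0, hval0⟩)
    | i1 + 1 =>
        have hsk' : InSkew α' β.tail (i1, j0) := (inSkew_cons a α' β i1 j0).2 hc0
        refine ⟨(i1, j0), hsk', ?_⟩
        rw [upTab, if_pos hsk']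
        simp only
        rw [hval0, hvu]
  · -- rows strict
    intro i j j' hjj hc hc'
    simp only [upTab]
    rw [if_pos hc, if_pos hc']
    have hlt := hT.2.1 (i + 1) j j' hjj ((inSkew_cons a α' β i j).1 hc)
      ((inSkew_cons a α' β i j').1 hc')
    exact rnk_lt_rnk (mem_upSet hT hc') hlt
  · -- first column strict
    intro i i' hii hc hc'
    simp only [upTab]
    rw [if_pos hc, if_pos hc']
    have hlt := hT.2.2 (i + 1) (i' + 1) (by omega) ((inSkew_cons a α' β i 0).1 hc)
      ((inSkew_cons a α' β i' 0).1 hc')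
    exact rnk_lt_rnk (mem_upSet hT hc') hlt

lemma step_inj {T1 T2 : ℕ × ℕ → ℕ} (hsub : SubComp β (a :: α'))
    (hT1 : IsSIT (a :: α') β T1) (hT2 : IsSIT (a :: α') β T2)
    (hrow : rowSet a (part β 0) T1 = rowSet a (part β 0) T2)
    (hup : upTab α' β.tail (skewSize (a :: α') β) a (part β 0) T1 =
      upTab α' β.tail (skewSize (a :: α') β) a (part β 0) T2) : T1 = T2 := by
  set N := skewSize (a :: α') β with hN
  set b := part β 0 with hb
  have hba : b ≤ a := by
    cases β with
    | nil => simp [hb, part]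
    | cons b0 β0 => simpa [hb, part] using hsub.2 0 (by simp)
  funext c
  obtain ⟨i, j⟩ := c
  by_cases hc : InSkew (a :: α') β (i, j)
  · match i with
    | 0 =>
        have hj := (inSkew_zero a α' β j).1 hc
        have hcard1 : (rowSet a b T1).card = a - b := rowSet_card hT1
        have hmem1 : ∀ u : Fin (a - b), T1 (0, b + (u : ℕ)) ∈ rowSet a b T1 := by
          intro u
          exact Finset.mem_image.2 ⟨b + u, Finset.mem_Ico.2 ⟨by omega, by
            have := u.isLt; omega⟩, rfl⟩
        have hmono1 : StrictMono fun u : Fin (a - b) => T1 (0, b + (u : ℕ)) := by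
          intro u u' huu
          refine hT1.2.1 0 (b + u) (b + u') (by exact Nat.add_lt_add_left huu b)
            ((inSkew_zero a α' β _).2 ⟨by omega, by have := u.isLt; omega⟩)
            ((inSkew_zero a α' β _).2 ⟨by omega, by have := u'.isLt; omega⟩)
        have hmem2 : ∀ u : Fin (a - b), T2 (0, b + (u : ℕ)) ∈ rowSet a b T1 := by
          intro u
          rw [hrow]
          exact Finset.mem_image.2 ⟨b + u, Finset.mem_Ico.2 ⟨by omega, by
            have := u.isLt; omega⟩, rfl⟩
        have hmono2 : StrictMono fun u : Fin (a - b) => T2 (0, b + (u : ℕ)) := by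
          intro u u' huu
          refine hT2.2.1 0 (b + u) (b + u') (by exact Nat.add_lt_add_left huu b)
            ((inSkew_zero a α' β _).2 ⟨by omega, by have := u.isLt; omega⟩)
            ((inSkew_zero a α' β _).2 ⟨by omega, by have := u'.isLt; omega⟩)
        have he1 := Finset.orderEmbOfFin_unique hcard1 hmem1 hmono1
        have he2 := Finset.orderEmbOfFin_unique hcard1 hmem2 hmono2
        have hfe : (fun u : Fin (a - b) => T1 (0, b + (u : ℕ))) =
            fun u : Fin (a - b) => T2 (0, b + (u : ℕ)) := he1.trans he2.symm
        have hfin : j - b < a - b := by omega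
        have := congrFun hfe ⟨j - b, hfin⟩
        have hbj : b + (j - b) = j := by omega
        simpa [hbj] using this
    | i1 + 1 =>
        have hsk' : InSkew α' β.tail (i1, j) := (inSkew_cons a α' β i1 j).2 hc
        have h1 := congrFun hup (i1, j)
        rw [upTab, upTab, if_pos hsk', if_pos hsk'] at h1
        have hRe : upSet N a b T1 = upSet N a b T2 := by rw [upSet, upSet, hrow]
        rw [hRe] at h1
        have hv1 := mem_upSet hT1 hsk'
        rw [hRe] at hv1
        have hv2 := mem_upSet hT2 hsk'
        exact rnk_injOn hv1 hv2 h1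
  · rw [hT1.1.zero_off _ hc, hT2.1.zero_off _ hc]

end Step

lemma step_surj {a : ℕ} {α' β : List ℕ} (hα : IsComposition (a :: α'))
    (hβ : IsComposition β) (hsub : SubComp β (a :: α')) (S : Finset ℕ)
    (hSsub : S ⊆ Finset.Icc 1 (skewSize (a :: α') β)) (hScard : S.card = a - part β 0)
    (hS1 : β = [] → 1 ∈ S) {T' : ℕ × ℕ → ℕ} (hT' : IsSIT α' β.tail T') :
    ∃ T : ℕ × ℕ → ℕ, IsSIT (a :: α') β T ∧ rowSet a (part β 0) T = S ∧
      upTab α' β.tail (skewSize (a :: α') β) a (part β 0) T = T' := by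
  classical
  set N := skewSize (a :: α') β with hN
  set b := part β 0 with hb
  set N' := skewSize α' β.tail with hN'
  have hsplit : N = (a - b) + N' := skew_split hsub
  have hba : b ≤ a := by
    cases β with
    | nil => simp [hb, part]
    | cons b0 β0 => simpa [hb, part] using hsub.2 0 (by simp)
  set R : Finset ℕ := Finset.Icc 1 N \ S with hRdef
  have hRcard : R.card = N' := by
    rw [hRdef, Finset.card_sdiff_of_subset hSsub, Nat.card_Icc, hScard]
    omega
  have hRsub : R ⊆ Finset.Icc 1 N := Finset.sdiff_subset
  -- entries of T' are in [1, N']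
  have hT'mem : ∀ c : ℕ × ℕ, InSkew α' β.tail c → 1 ≤ T' c ∧ T' c ≤ N' := by
    intro c hc
    have := hT'.1.mem c hc
    rw [Finset.mem_Icc] at this
    exact this
  set T : ℕ × ℕ → ℕ := fun c =>
    if c.1 = 0 ∧ b ≤ c.2 ∧ c.2 < a then nthe S (c.2 - b)
    else if 1 ≤ c.1 ∧ InSkew α' β.tail (c.1 - 1, c.2) then nthe R (T' (c.1 - 1, c.2) - 1)
    else 0 with hTdef
  -- evaluation lemmas
  have hTrow : ∀ j : ℕ, b ≤ j → j < a → T (0, j) = nthe S (j - b) := by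
    intro j h1 h2
    rw [hTdef]
    exact if_pos ⟨rfl, h1, h2⟩
  have hTup : ∀ i j : ℕ, InSkew α' β.tail (i, j) → T (i + 1, j) = nthe R (T' (i, j) - 1) := by
    intro i j hc
    rw [hTdef]
    refine (if_neg ?_).trans (if_pos ?_)
    · rintro ⟨h0, -⟩
      exact Nat.succ_ne_zero i h0
    · exact ⟨Nat.succ_le_succ (Nat.zero_le i), hc⟩
  have hTzero : ∀ c : ℕ × ℕ, ¬ InSkew (a :: α') β c → T c = 0 := by
    rintro ⟨i, j⟩ hc
    rw [hTdef]
    refine (if_neg ?_).trans (if_neg ?_)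
    · rintro ⟨hi0, hbj, hja⟩
      obtain rfl : i = 0 := hi0
      exact hc ((inSkew_zero a α' β j).2 ⟨hbj, hja⟩)
    · rintro ⟨hi1, hsk⟩
      have hii : i - 1 + 1 = i := by
        have : 1 ≤ i := hi1
        omega
      have hsk2 : InSkew α' β.tail (i - 1, j) := hsk
      exact hc (hii ▸ (inSkew_cons a α' β (i - 1) j).1 hsk2)
  -- membership of values
  have hrowmemS : ∀ j : ℕ, b ≤ j → j < a → T (0, j) ∈ S := by
    intro j h1 h2
    rw [hTrow j h1 h2]
    exact nthe_mem hScard (by omega)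
  have hupmemR : ∀ i j : ℕ, InSkew α' β.tail (i, j) → T (i + 1, j) ∈ R := by
    intro i j hc
    rw [hTup i j hc]
    have := hT'mem _ hc
    exact nthe_mem hRcard (by omega)
  have hSR : ∀ v, v ∈ S → v ∈ R → False := by
    intro v h1 h2
    exact (Finset.mem_sdiff.1 h2).2 h1
  have hT_isSIT : IsSIT (a :: α') β T := by
    refine ⟨⟨hTzero, ?_, ?_, ?_⟩, ?_, ?_⟩
    · -- mem
      rintro ⟨i, j⟩ hc
      match i with
      | 0 =>
          have hj := (inSkew_zero a α' β j).1 hc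
          exact hSsub (hrowmemS j hj.1 hj.2)
      | i1 + 1 =>
          have hsk' : InSkew α' β.tail (i1, j) := (inSkew_cons a α' β i1 j).2 hc
          exact hRsub (hupmemR i1 j hsk')
    · -- inj
      rintro ⟨i, j⟩ ⟨i', j'⟩ hc hc' he
      rcases i with _ | i1 <;> rcases i' with _ | i2
      · have hj := (inSkew_zero a α' β j).1 hc
        have hj' := (inSkew_zero a α' β j').1 hc'
        rw [hTrow j hj.1 hj.2, hTrow j' hj'.1 hj'.2] at he
        have hu : j - b < a - b := by omega
        have hu' : j' - b < a - b := by omega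
        have := nthe_inj hScard hu hu' he
        simp only [Prod.mk.injEq]
        exact ⟨by trivial, by omega⟩
      · exfalso
        have hj := (inSkew_zero a α' β j).1 hc
        have hsk' : InSkew α' β.tail (i2, j') := (inSkew_cons a α' β i2 j').2 hc'
        have h1 := hrowmemS j hj.1 hj.2
        have h2 := hupmemR i2 j' hsk'
        rw [he] at h1
        exact hSR _ h1 h2
      · exfalso
        have hj' := (inSkew_zero a α' β j').1 hc'
        have hsk : InSkew α' β.tail (i1, j) := (inSkew_cons a α' β i1 j).2 hc
        have h1 := hrowmemS j' hj'.1 hj'.2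
        have h2 := hupmemR i1 j hsk
        rw [← he] at h1
        exact hSR _ h1 h2
      · have hsk : InSkew α' β.tail (i1, j) := (inSkew_cons a α' β i1 j).2 hc
        have hsk' : InSkew α' β.tail (i2, j') := (inSkew_cons a α' β i2 j').2 hc'
        rw [hTup i1 j hsk, hTup i2 j' hsk'] at he
        have hm1 := hT'mem _ hsk
        have hm2 := hT'mem _ hsk'
        have := nthe_inj hRcard (by omega) (by omega) he
        have hTT : T' (i1, j) = T' (i2, j') := by omega
        have := hT'.1.inj _ _ hsk hsk' hTT
        have e1 := congrArg Prod.fst this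
        have e2 := congrArg Prod.snd this
        simp only at e1 e2
        simp only [Prod.mk.injEq]
        exact ⟨by omega, by omega⟩
    · -- surj
      intro v hv
      by_cases hvS : v ∈ S
      · obtain ⟨u, hu, hnv⟩ := exists_nthe hScard hvS
        refine ⟨(0, b + u), (inSkew_zero a α' β _).2 ⟨by omega, by omega⟩, ?_⟩
        rw [hTrow (b + u) (by omega) (by omega)]
        simpa using hnv
      · have hvR : v ∈ R := Finset.mem_sdiff.2 ⟨hv, hvS⟩
        obtain ⟨u, hu, hnv⟩ := exists_nthe hRcard hvR
        obtain ⟨c', hc', hTc'⟩ := hT'.1.surj (u + 1) (Finset.mem_Icc.2 ⟨by omega, by omega⟩)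
        obtain ⟨i', j'⟩ := c'
        refine ⟨(i' + 1, j'), (inSkew_cons a α' β i' j').1 hc', ?_⟩
        rw [hTup i' j' hc', hTc']
        simpa using hnv
    · -- rows strict
      rintro i j j' hjj hc hc'
      match i with
      | 0 =>
          have hj := (inSkew_zero a α' β j).1 hc
          have hj' := (inSkew_zero a α' β j').1 hc'
          rw [hTrow j hj.1 hj.2, hTrow j' hj'.1 hj'.2]
          exact nthe_lt hScard (by omega) (by omega)
      | i1 + 1 =>
          have hsk : InSkew α' β.tail (i1, j) := (inSkew_cons a α' β i1 j).2 hc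
          have hsk' : InSkew α' β.tail (i1, j') := (inSkew_cons a α' β i1 j').2 hc'
          rw [hTup i1 j hsk, hTup i1 j' hsk']
          have hm1 := hT'mem _ hsk
          have hm2 := hT'mem _ hsk'
          have hlt := hT'.2.1 i1 j j' hjj hsk hsk'
          exact nthe_lt hRcard (by omega) (by omega)
    · -- first column strict
      rintro i i' hii hc hc'
      rcases i with _ | i1 <;> rcases i' with _ | i2
      · exact absurd hii (lt_irrefl 0)
      · have hj := (inSkew_zero a α' β 0).1 hc
        have hb0 : b = 0 := by omega
        have hβnil : β = [] := by
          cases β with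
          | nil => rfl
          | cons b0 β0 =>
              exfalso
              have : 0 < b0 := hβ b0 (by simp)
              rw [hb] at hb0
              simp [part] at hb0
              omega
        have h1S : 1 ∈ S := hS1 hβnil
        have hpos : ∀ w ∈ S, 1 ≤ w := fun w hw => (Finset.mem_Icc.1 (hSsub hw)).1
        rw [hTrow 0 (by omega) hj.2]
        have hz : nthe S (0 - b) = 1 := by
          rw [hb0]
          exact nthe_zero_of_one_mem h1S hpos
        rw [hz]
        have hsk' : InSkew α' β.tail (i2, 0) := (inSkew_cons a α' β i2 0).2 hc'
        have hmem := hupmemR i2 0 hsk'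
        have h1 := (Finset.mem_Icc.1 (hRsub hmem)).1
        have hne : T (i2 + 1, 0) ≠ 1 := fun hh => hSR 1 h1S (hh ▸ hmem)
        omega
      · exact absurd hii (by omega)
      · have hsk : InSkew α' β.tail (i1, 0) := (inSkew_cons a α' β i1 0).2 hc
        have hsk' : InSkew α' β.tail (i2, 0) := (inSkew_cons a α' β i2 0).2 hc'
        rw [hTup i1 0 hsk, hTup i2 0 hsk']
        have hm1 := hT'mem _ hsk
        have hm2 := hT'mem _ hsk'
        have hlt := hT'.2.2 i1 i2 (by omega) hsk hsk'
        exact nthe_lt hRcard (by omega) (by omega)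
  refine ⟨T, hT_isSIT, ?_, ?_⟩
  · -- rowSet = S
    apply Finset.eq_of_subset_of_card_le
    · intro v hv
      obtain ⟨j, hj, rfl⟩ := Finset.mem_image.1 hv
      rw [Finset.mem_Ico] at hj
      exact hrowmemS j hj.1 hj.2
    · rw [hScard, rowSet_card hT_isSIT]
  · -- upTab = T'
    have hrowS : rowSet a b T = S := by
      apply Finset.eq_of_subset_of_card_le
      · intro v hv
        obtain ⟨j, hj, rfl⟩ := Finset.mem_image.1 hv
        rw [Finset.mem_Ico] at hj
        exact hrowmemS j hj.1 hj.2
      · rw [hScard, rowSet_card hT_isSIT]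
    have hupR : upSet N a b T = R := by rw [upSet, hrowS]
    funext c
    obtain ⟨i, j⟩ := c
    by_cases hc : InSkew α' β.tail (i, j)
    · rw [upTab, if_pos hc]
      simp only
      rw [hupR, hTup i j hc]
      have hm := hT'mem _ hc
      rw [rnk_nthe hRcard (by omega)]
      omega
    · rw [upTab, if_neg hc, hT'.1.zero_off _ hc]

lemma card_step (a : ℕ) (α' β : List ℕ) (hα : IsComposition (a :: α'))
    (hβ : IsComposition β) (hsub : SubComp β (a :: α')) :
    Nat.card {T : ℕ × ℕ → ℕ // IsSIT (a :: α') β T} =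
      (((Finset.Icc 1 (skewSize (a :: α') β)).powersetCard (a - part β 0)).filter
          (fun S => β = [] → 1 ∈ S)).card *
        Nat.card {T : ℕ × ℕ → ℕ // IsSIT α' β.tail T} := by
  classical
  set N := skewSize (a :: α') β with hN
  set b := part β 0 with hb
  set Sf := ((Finset.Icc 1 N).powersetCard (a - b)).filter (fun S => β = [] → 1 ∈ S) with hSf
  have hmemSf : ∀ {T : ℕ × ℕ → ℕ}, IsSIT (a :: α') β T → rowSet a b T ∈ Sf := by
    intro T hT
    rw [hSf, Finset.mem_filter, Finset.mem_powersetCard]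
    exact ⟨⟨rowSet_subset hT, rowSet_card hT⟩, fun hn => one_mem_rowSet hα hT hn⟩
  set F : {T : ℕ × ℕ → ℕ // IsSIT (a :: α') β T} →
      {S : Finset ℕ // S ∈ Sf} × {T' : ℕ × ℕ → ℕ // IsSIT α' β.tail T'} :=
    fun x => (⟨rowSet a b x.1, hmemSf x.2⟩,
      ⟨upTab α' β.tail N a b x.1, isSIT_upTab hsub x.2⟩) with hF
  have hbij : Function.Bijective F := by
    constructor
    · rintro ⟨T1, h1⟩ ⟨T2, h2⟩ he
      rw [hF, Prod.mk.injEq, Subtype.mk.injEq, Subtype.mk.injEq] at he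
      exact Subtype.ext (step_inj hsub h1 h2 he.1 he.2)
    · rintro ⟨⟨S, hS⟩, ⟨T', hT'⟩⟩
      rw [hSf, Finset.mem_filter, Finset.mem_powersetCard] at hS
      obtain ⟨T, hT, hr, hu⟩ := step_surj hα hβ hsub S hS.1.1 hS.1.2 hS.2 hT'
      exact ⟨⟨T, hT⟩, by rw [hF]; exact Prod.ext (Subtype.ext hr) (Subtype.ext hu)⟩
  rw [Nat.card_congr (Equiv.ofBijective F hbij), Nat.card_prod, Nat.card_eq_finsetCard]

lemma card_step_cons (a b : ℕ) (α' β' : List ℕ) (hα : IsComposition (a :: α'))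
    (hβ : IsComposition (b :: β')) (hsub : SubComp (b :: β') (a :: α')) :
    Nat.card {T : ℕ × ℕ → ℕ // IsSIT (a :: α') (b :: β') T} =
      (skewSize (a :: α') (b :: β')).choose (a - b) *
        Nat.card {T : ℕ × ℕ → ℕ // IsSIT α' β' T} := by
  rw [card_step a α' (b :: β') hα hβ hsub]
  congr 1
  rw [Finset.filter_true_of_mem (fun S _ => fun h => absurd h (by simp)),
    Finset.card_powersetCard, Nat.card_Icc]
  simp [part]

lemma card_step_nil (a : ℕ) (α' : List ℕ) (hα : IsComposition (a :: α')) :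
    Nat.card {T : ℕ × ℕ → ℕ // IsSIT (a :: α') [] T} =
      ((a :: α').sum - 1).choose (a - 1) *
        Nat.card {T : ℕ × ℕ → ℕ // IsSIT α' [] T} := by
  have hsub : SubComp [] (a :: α') := ⟨Nat.zero_le _, fun j hj => absurd hj (by simp)⟩
  have ha : 0 < a := hα a (by simp)
  have hNs : skewSize (a :: α') [] = (a :: α').sum := by simp [skewSize]
  have hN1 : 1 ≤ (a :: α').sum := by simp only [List.sum_cons]; omega
  rw [card_step a α' [] hα (by intro x hx; simp at hx) hsub]
  congr 1
  rw [hNs]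
  set N := (a :: α').sum with hNd
  -- bijection S ↦ S.erase 1 with powersetCard (a-1) (Icc 2 N)
  have := Finset.card_bij (fun (S : Finset ℕ) (_ : S ∈ ((Finset.Icc 1 N).powersetCard
      (a - part [] 0)).filter (fun S => ([] : List ℕ) = [] → 1 ∈ S)) => S.erase 1)
    (t := (Finset.Icc 2 N).powersetCard (a - 1)) ?_ ?_ ?_
  · rw [this, Finset.card_powersetCard, Nat.card_Icc,
      show N + 1 - 2 = N - 1 by omega]
  · intro S hS
    rw [Finset.mem_filter, Finset.mem_powersetCard] at hS
    have h1S : 1 ∈ S := hS.2 rfl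
    rw [Finset.mem_powersetCard]
    constructor
    · intro x hx
      rw [Finset.mem_erase] at hx
      have := Finset.mem_Icc.1 (hS.1.1 hx.2)
      exact Finset.mem_Icc.2 ⟨by omega, this.2⟩
    · rw [Finset.card_erase_of_mem h1S, hS.1.2]
      simp [part]
  · intro S hS S' hS' he
    rw [Finset.mem_filter] at hS hS'
    have h1S : 1 ∈ S := hS.2 rfl
    have h1S' : 1 ∈ S' := hS'.2 rfl
    have he' : S.erase 1 = S'.erase 1 := he
    rw [← Finset.insert_erase h1S, ← Finset.insert_erase h1S', he']
  · intro A hA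
    rw [Finset.mem_powersetCard] at hA
    have h1A : 1 ∉ A := fun h => by
      have := Finset.mem_Icc.1 (hA.1 h); omega
    refine ⟨insert 1 A, ?_, ?_⟩
    · rw [Finset.mem_filter, Finset.mem_powersetCard]
      refine ⟨⟨?_, ?_⟩, fun _ => Finset.mem_insert_self 1 A⟩
      · intro x hx
        rcases Finset.mem_insert.1 hx with h | h
        · subst h; exact Finset.mem_Icc.2 ⟨le_refl 1, hN1⟩
        · have := Finset.mem_Icc.1 (hA.1 h)
          exact Finset.mem_Icc.2 ⟨by omega, this.2⟩
      · rw [Finset.card_insert_of_notMem h1A, hA.2]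
        simp only [part_nil]
        omega
    · exact Finset.erase_insert h1A

lemma card_sit_nil : Nat.card {T : ℕ × ℕ → ℕ // IsSIT [] [] T} = 1 := by
  rw [Nat.card_eq_one_iff_unique]
  constructor
  · constructor
    rintro ⟨T1, h1⟩ ⟨T2, h2⟩
    refine Subtype.ext (funext fun c => ?_)
    show T1 c = T2 c
    rw [h1.1.zero_off c (fun hc => by exact absurd hc.1.1 (by simp)),
      h2.1.zero_off c (fun hc => by exact absurd hc.1.1 (by simp))]
  · refine ⟨⟨fun _ => 0, ⟨⟨fun c _ => rfl, fun c hc => absurd hc.1.1 (by simp),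
      fun c c' hc _ _ => absurd hc.1.1 (by simp),
      fun v hv => absurd hv (by simp [skewSize])⟩,
      fun i j j' _ hc _ => absurd hc.1.1 (by simp),
      fun i i' _ hc _ => absurd hc.1.1 (by simp)⟩⟩⟩

lemma count_straight : ∀ (γ : List ℕ), IsComposition γ →
    Nat.card {T : ℕ × ℕ → ℕ // IsSIT γ [] T} *
      ((∏ j ∈ Finset.range γ.length, (γ.sum - (γ.take j).sum)) *
        ∏ i ∈ Finset.range γ.length, Nat.factorial (part γ i - 1)) =
      Nat.factorial γ.sum := by
  intro γ
  induction γ with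
  | nil => intro _; simp [card_sit_nil]
  | cons g γ' ih =>
      intro hγ
      have hγ' : IsComposition γ' := fun x hx => hγ x (List.mem_cons_of_mem _ hx)
      have hg : 0 < g := hγ g (by simp)
      have hM : (g :: γ').sum = g + γ'.sum := by simp
      set M' := γ'.sum with hM'
      set M := (g :: γ').sum with hMd
      have hP : ∏ j ∈ Finset.range (g :: γ').length, (M - ((g :: γ').take j).sum) =
          M * ∏ j ∈ Finset.range γ'.length, (M' - (γ'.take j).sum) := by
        rw [List.length_cons, Finset.prod_range_succ',
          show M - ((g :: γ').take 0).sum = M by simp, mul_comm]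
        congr 1
        apply Finset.prod_congr rfl
        intro j _
        rw [List.take_succ_cons, List.sum_cons]
        omega
      have hQ : ∏ i ∈ Finset.range (g :: γ').length, Nat.factorial (part (g :: γ') i - 1) =
          Nat.factorial (g - 1) * ∏ i ∈ Finset.range γ'.length,
            Nat.factorial (part γ' i - 1) := by
        rw [List.length_cons, Finset.prod_range_succ', mul_comm]
        rfl
      have hstep := card_step_nil g γ' hγ
      have hch : (M - 1).choose (g - 1) * Nat.factorial (g - 1) * Nat.factorial M' =
          Nat.factorial (M - 1) := by
        have h1 := Nat.choose_mul_factorial_mul_factorial (show g - 1 ≤ M - 1 by omega)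
        rwa [show M - 1 - (g - 1) = M' by omega] at h1
      rw [hstep, hP, hQ]
      calc (M - 1).choose (g - 1) * Nat.card {T : ℕ × ℕ → ℕ // IsSIT γ' [] T} *
            (M * (∏ j ∈ Finset.range γ'.length, (M' - (γ'.take j).sum)) *
              (Nat.factorial (g - 1) * ∏ i ∈ Finset.range γ'.length,
                Nat.factorial (part γ' i - 1)))
          = M * ((M - 1).choose (g - 1) * Nat.factorial (g - 1)) *
              (Nat.card {T : ℕ × ℕ → ℕ // IsSIT γ' [] T} *
                ((∏ j ∈ Finset.range γ'.length, (M' - (γ'.take j).sum)) *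
                  ∏ i ∈ Finset.range γ'.length, Nat.factorial (part γ' i - 1))) := by ring
        _ = M * ((M - 1).choose (g - 1) * Nat.factorial (g - 1)) * Nat.factorial M' := by
              rw [ih hγ']
        _ = M * ((M - 1).choose (g - 1) * Nat.factorial (g - 1) * Nat.factorial M') := by ring
        _ = M * Nat.factorial (M - 1) := by rw [hch]
        _ = Nat.factorial M := Nat.mul_factorial_pred (by omega)

lemma count_skew : ∀ (β α : List ℕ), IsComposition α → IsComposition β → SubComp β α →
    Nat.card {T : ℕ × ℕ → ℕ // IsSIT α β T} *
        (Nat.factorial ((α.drop β.length).sum) *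
          ∏ i ∈ Finset.range β.length, Nat.factorial (part α i - part β i)) =
      Nat.card {T : ℕ × ℕ → ℕ // IsSIT (α.drop β.length) [] T} *
        Nat.factorial (skewSize α β) := by
  intro β
  induction β with
  | nil => intro α _ _ _; simp [skewSize]
  | cons b β' ih =>
      intro α hα hβ hsub
      match α with
      | [] => exact absurd hsub.1 (by simp)
      | a :: α' =>
        have hα' : IsComposition α' := fun x hx => hα x (List.mem_cons_of_mem _ hx)
        have hβ' : IsComposition β' := fun x hx => hβ x (List.mem_cons_of_mem _ hx)
        have hsub' := subComp_tail hsub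
        have hba : b ≤ a := by simpa [part] using hsub.2 0 (by simp)
        have hN' := subComp_sum_le hsub'
        have hsz : skewSize (a :: α') (b :: β') = (a - b) + skewSize α' β' := by
          have := skew_split hsub
          simpa [part] using this
        set N := skewSize (a :: α') (b :: β') with hNd
        set N' := skewSize α' β' with hN'd
        have hstep := card_step_cons a b α' β' hα hβ hsub
        have hdrop : (a :: α').drop (b :: β').length = α'.drop β'.length := by
          simp
        have hprod : ∏ i ∈ Finset.range (b :: β').length,
            Nat.factorial (part (a :: α') i - part (b :: β') i) =
            Nat.factorial (a - b) * ∏ i ∈ Finset.range β'.length,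
              Nat.factorial (part α' i - part β' i) := by
          rw [List.length_cons, Finset.prod_range_succ', mul_comm]
          rfl
        have hch : N.choose (a - b) * Nat.factorial (a - b) * Nat.factorial N' =
            Nat.factorial N := by
          have h1 := Nat.choose_mul_factorial_mul_factorial (show a - b ≤ N by omega)
          rwa [show N - (a - b) = N' by omega] at h1
        have hih := ih α' hα' hβ' hsub'
        rw [hstep, hdrop, hprod]
        set M := (α'.drop β'.length).sum
        calc N.choose (a - b) * Nat.card {T : ℕ × ℕ → ℕ // IsSIT α' β' T} *
              (Nat.factorial M * (Nat.factorial (a - b) *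
                ∏ i ∈ Finset.range β'.length, Nat.factorial (part α' i - part β' i)))
            = N.choose (a - b) * Nat.factorial (a - b) *
                (Nat.card {T : ℕ × ℕ → ℕ // IsSIT α' β' T} *
                  (Nat.factorial M * ∏ i ∈ Finset.range β'.length,
                    Nat.factorial (part α' i - part β' i))) := by ring
          _ = N.choose (a - b) * Nat.factorial (a - b) *
                (Nat.card {T : ℕ × ℕ → ℕ // IsSIT (α'.drop β'.length) [] T} *
                  Nat.factorial N') := by rw [hih]
          _ = Nat.card {T : ℕ × ℕ → ℕ // IsSIT (α'.drop β'.length) [] T} *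
                (N.choose (a - b) * Nat.factorial (a - b) * Nat.factorial N') := by ring
          _ = Nat.card {T : ℕ × ℕ → ℕ // IsSIT (α'.drop β'.length) [] T} *
                Nat.factorial N := by rw [hch]

/-- enumeration of skew standard immaculate tableaux. With
`γ = (α_{k+1}, …, α_ℓ)` and `M = |γ|`:
(1) if `k < ℓ` then `|SIT(γ)| ⋅ (∏_{j=0}^{ℓ-k-1} (M - (γ_1 + ⋯ + γ_j))) ⋅ ∏ (γ_i - 1)! = M!`;
(2) `|SIT(α/β)| ⋅ M! ⋅ ∏_{i=1}^{k} (α_i - β_i)! = |SIT(γ)| ⋅ (|α|-|β|)!`. -/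
theorem skew_SIT_count (α β : List ℕ)
    (hα : IsComposition α) (hβ : IsComposition β) (hsub : SubComp β α) :
    (β.length < α.length →
      Nat.card {T : ℕ × ℕ → ℕ // IsSIT (α.drop β.length) [] T} *
        ((∏ j ∈ Finset.range (α.length - β.length),
            ((α.drop β.length).sum - ((α.drop β.length).take j).sum)) *
          ∏ i ∈ Finset.range (α.length - β.length),
            Nat.factorial (part (α.drop β.length) i - 1)) =
        Nat.factorial ((α.drop β.length).sum)) ∧
    (Nat.card {T : ℕ × ℕ → ℕ // IsSIT α β T} *
        (Nat.factorial ((α.drop β.length).sum) *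
          ∏ i ∈ Finset.range β.length, Nat.factorial (part α i - part β i)) =
      Nat.card {T : ℕ × ℕ → ℕ // IsSIT (α.drop β.length) [] T} *
        Nat.factorial (skewSize α β)) := by
  constructor
  · intro _
    have h := count_straight (α.drop β.length) (fun x hx => hα x (List.mem_of_mem_drop hx))
    rwa [List.length_drop] at h
  · exact count_skew β α hα hβ hsub


end ImmaculateSkew
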